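/- Lemma (automorphisms of a power complex are induced by vertex permutations). Let 𝒦 be a family of subsets of V with ∅ ∈ 𝒦. Then every order-automorphism ρ of the poset (ℱ, ⊆) is induced by a unique permutation g of the vertex set V → N, in the sense that ρ(A) equals the image g(A) for every A ∈ ℱ; this assignment is an isomorphism from the group of order-automorphisms of (ℱ, ⊆) onto the group of those permutations g of V → N for which the image map A ↦ g(A) is a bijection of ℱ onto itself. -/
import Mathlib


/-- The face `F(ε)` of the power complex. -/
def face (n v : ℕ) (F : Set (Fin v)) (ε : Fin v → Fin n) : Set (Fin v → Fin n) :=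
  {η | ∀ i ∉ F, η i = ε i}

/-- The power complex `n^𝒦`, as a family of subsets of `V → N`. -/
def powerComplex (n v : ℕ) (𝒦 : Set (Set (Fin v))) : Set (Set (Fin v → Fin n)) :=
  {A | ∃ F ∈ 𝒦, ∃ ε : Fin v → Fin n, A = face n v F ε}

/-- The group of permutations `g` of the vertex set `V → N` for which the image map
`A ↦ g(A)` is a bijection of the family `ℱ` onto itself. -/
def inducingPerms (n v : ℕ) (𝒦 : Set (Set (Fin v))) :
    Subgroup (Equiv.Perm (Fin v → Fin n)) where
  carrier := {g | Set.BijOn (fun A => g '' A) (powerComplex n v 𝒦) (powerComplex n v 𝒦)}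
  one_mem' := by
    have h : (fun A : Set (Fin v → Fin n) => ⇑(1 : Equiv.Perm (Fin v → Fin n)) '' A) = id := by
      funext A; simp
    simp only [Set.mem_setOf_eq, h]
    exact Set.bijOn_id _
  mul_mem' := by
    intro g h hg hh
    have hcomp : (fun A : Set (Fin v → Fin n) => ⇑(g * h) '' A) =
        (fun A : Set (Fin v → Fin n) => ⇑g '' A) ∘ (fun A => ⇑h '' A) := by
      funext A
      simp only [Function.comp_apply, ← Set.image_comp]
      rfl
    simp only [Set.mem_setOf_eq, hcomp]
    exact hg.comp hh
  inv_mem' := by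
    intro g hg
    refine Set.BijOn.symm ⟨?_, ?_⟩ hg
    · intro A _
      simp [← Set.image_comp]
    · intro A _
      simp [← Set.image_comp]

namespace PCAux

variable {n v : ℕ} {𝒦 : Set (Set (Fin v))}

lemma singleton_mem (hempty : ∅ ∈ 𝒦) (ε : Fin v → Fin n) :
    {ε} ∈ powerComplex n v 𝒦 := by
  refine ⟨∅, hempty, ε, ?_⟩
  ext η
  simp [face, funext_iff, eq_comm]

lemma nonempty_of_mem {A : Set (Fin v → Fin n)} (hA : A ∈ powerComplex n v 𝒦) :
    A.Nonempty := by
  obtain ⟨F, _, ε, rfl⟩ := hA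
  exact ⟨ε, fun i _ => rfl⟩

variable (hempty : ∅ ∈ 𝒦)

lemma rho_singleton (ρ : (powerComplex n v 𝒦) ≃o (powerComplex n v 𝒦)) (η : Fin v → Fin n) :
    ∃ ξ : Fin v → Fin n, (ρ ⟨{η}, singleton_mem hempty η⟩ : Set (Fin v → Fin n)) = {ξ} := by
  obtain ⟨ξ, hξ⟩ := nonempty_of_mem (ρ ⟨{η}, singleton_mem hempty η⟩).2
  refine ⟨ξ, ?_⟩
  have hle : (⟨{ξ}, singleton_mem hempty ξ⟩ : powerComplex n v 𝒦) ≤ ρ ⟨{η}, singleton_mem hempty η⟩ :=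
    Set.singleton_subset_iff.2 hξ
  have h2 : ρ.symm ⟨{ξ}, singleton_mem hempty ξ⟩ ≤ ⟨{η}, singleton_mem hempty η⟩ := by
    simpa using ρ.symm.monotone hle
  have h3 : (ρ.symm ⟨{ξ}, singleton_mem hempty ξ⟩ : Set (Fin v → Fin n)) = {η} := by
    obtain ⟨x, hx⟩ := nonempty_of_mem (ρ.symm ⟨{ξ}, singleton_mem hempty ξ⟩).2
    have := h2 hx
    apply Set.eq_singleton_iff_nonempty_unique_mem.2
    exact ⟨⟨x, hx⟩, fun y hy => h2 hy⟩
  have h4 : ρ.symm ⟨{ξ}, singleton_mem hempty ξ⟩ = ⟨{η}, singleton_mem hempty η⟩ :=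
    Subtype.ext h3
  have := congrArg ρ h4
  rw [OrderIso.apply_symm_apply] at this
  exact congrArg Subtype.val this.symm

noncomputable def gmap (ρ : (powerComplex n v 𝒦) ≃o (powerComplex n v 𝒦))
    (η : Fin v → Fin n) : Fin v → Fin n :=
  Classical.choose (rho_singleton hempty ρ η)

lemma gmap_spec (ρ : (powerComplex n v 𝒦) ≃o (powerComplex n v 𝒦)) (η : Fin v → Fin n) :
    (ρ ⟨{η}, singleton_mem hempty η⟩ : Set (Fin v → Fin n)) = {gmap hempty ρ η} :=
  Classical.choose_spec (rho_singleton hempty ρ η)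

lemma gmap_spec' (ρ : (powerComplex n v 𝒦) ≃o (powerComplex n v 𝒦)) (η : Fin v → Fin n) :
    ρ ⟨{η}, singleton_mem hempty η⟩ = ⟨{gmap hempty ρ η}, singleton_mem hempty _⟩ :=
  Subtype.ext (gmap_spec hempty ρ η)

lemma gmap_symm_gmap (ρ : (powerComplex n v 𝒦) ≃o (powerComplex n v 𝒦)) (η : Fin v → Fin n) :
    gmap hempty ρ.symm (gmap hempty ρ η) = η := by
  have h1 := gmap_spec' hempty ρ η
  have h2 := gmap_spec' hempty ρ.symm (gmap hempty ρ η)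
  rw [← h1, OrderIso.symm_apply_apply] at h2
  have := congrArg Subtype.val h2
  simpa using this.symm

lemma gmap_gmap_symm (ρ : (powerComplex n v 𝒦) ≃o (powerComplex n v 𝒦)) (η : Fin v → Fin n) :
    gmap hempty ρ (gmap hempty ρ.symm η) = η := by
  have := gmap_symm_gmap hempty ρ.symm η
  rwa [OrderIso.symm_symm] at this

noncomputable def gperm (ρ : (powerComplex n v 𝒦) ≃o (powerComplex n v 𝒦)) :
    Equiv.Perm (Fin v → Fin n) :=
  ⟨gmap hempty ρ, gmap hempty ρ.symm, gmap_symm_gmap hempty ρ, gmap_gmap_symm hempty ρ⟩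

lemma image_eq (ρ : (powerComplex n v 𝒦) ≃o (powerComplex n v 𝒦))
    (A : powerComplex n v 𝒦) :
    (ρ A : Set (Fin v → Fin n)) = gperm hempty ρ '' A := by
  ext η
  constructor
  · intro hη
    have hle : (⟨{η}, singleton_mem hempty η⟩ : powerComplex n v 𝒦) ≤ ρ A :=
      Set.singleton_subset_iff.2 hη
    have h2 : ρ.symm ⟨{η}, singleton_mem hempty η⟩ ≤ A := by
      simpa using ρ.symm.monotone hle
    rw [gmap_spec' hempty ρ.symm η] at h2
    have hmem : gmap hempty ρ.symm η ∈ (A : Set (Fin v → Fin n)) :=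
      h2 rfl
    exact ⟨gmap hempty ρ.symm η, hmem, gmap_gmap_symm hempty ρ η⟩
  · rintro ⟨ξ, hξ, rfl⟩
    have hle : (⟨{ξ}, singleton_mem hempty ξ⟩ : powerComplex n v 𝒦) ≤ A :=
      Set.singleton_subset_iff.2 hξ
    have h2 : ρ ⟨{ξ}, singleton_mem hempty ξ⟩ ≤ ρ A := ρ.monotone hle
    rw [gmap_spec' hempty ρ ξ] at h2
    exact h2 rfl

lemma gperm_unique (ρ : (powerComplex n v 𝒦) ≃o (powerComplex n v 𝒦))
    (g : Equiv.Perm (Fin v → Fin n))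
    (h : ∀ A : powerComplex n v 𝒦, (ρ A : Set (Fin v → Fin n)) = g '' A) :
    g = gperm hempty ρ := by
  apply Equiv.ext
  intro η
  have h1 := h ⟨{η}, singleton_mem hempty η⟩
  have h2 := gmap_spec hempty ρ η
  rw [h2, Set.image_singleton] at h1
  exact (Set.singleton_eq_singleton_iff.1 h1.symm)

end PCAux

namespace PCAux2
open PCAux

variable {n v : ℕ} {𝒦 : Set (Set (Fin v))} (hempty : ∅ ∈ 𝒦)

lemma mem_inducing_iff (g : Equiv.Perm (Fin v → Fin n)) :
    g ∈ inducingPerms n v 𝒦 ↔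
      Set.BijOn (fun A => g '' A) (powerComplex n v 𝒦) (powerComplex n v 𝒦) := Iff.rfl

lemma gperm_mem (ρ : (powerComplex n v 𝒦) ≃o (powerComplex n v 𝒦)) :
    gperm hempty ρ ∈ inducingPerms n v 𝒦 := by
  rw [mem_inducing_iff]
  refine ⟨?_, ?_, ?_⟩
  · intro A hA
    have h := image_eq hempty ρ ⟨A, hA⟩
    show gperm hempty ρ '' A ∈ powerComplex n v 𝒦
    rw [← h]
    exact (ρ ⟨A, hA⟩).2
  · exact (Set.image_injective.2 (gperm hempty ρ).injective).injOn
  · intro B hB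
    refine ⟨(ρ.symm ⟨B, hB⟩ : Set (Fin v → Fin n)), (ρ.symm ⟨B, hB⟩).2, ?_⟩
    have := image_eq hempty ρ (ρ.symm ⟨B, hB⟩)
    simp only [OrderIso.apply_symm_apply] at this
    exact this.symm

def indIso (g : Equiv.Perm (Fin v → Fin n)) (hg : g ∈ inducingPerms n v 𝒦) :
    (powerComplex n v 𝒦) ≃o (powerComplex n v 𝒦) where
  toFun A := ⟨g '' A, ((mem_inducing_iff g).1 hg).mapsTo A.2⟩
  invFun A := ⟨g.symm '' (A : Set (Fin v → Fin n)),
    ((mem_inducing_iff g⁻¹).1 ((inducingPerms n v 𝒦).inv_mem hg)).mapsTo A.2⟩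
  left_inv A := by
    apply Subtype.ext
    show g.symm '' (g '' (A : Set (Fin v → Fin n))) = A
    simp [Set.image_image]
  right_inv A := by
    apply Subtype.ext
    show g '' (g.symm '' (A : Set (Fin v → Fin n))) = A
    simp [Set.image_image]
  map_rel_iff' {A B} := by
    constructor
    · intro h
      exact fun x hx => by
        have := h ⟨x, hx, rfl⟩
        obtain ⟨y, hy, hyx⟩ := this
        rwa [← g.injective hyx]
    · intro h x hx
      obtain ⟨y, hy, rfl⟩ := hx
      exact ⟨y, h hy, rfl⟩

lemma indIso_apply (g : Equiv.Perm (Fin v → Fin n)) (hg : g ∈ inducingPerms n v 𝒦)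
    (A : powerComplex n v 𝒦) :
    (indIso g hg A : Set (Fin v → Fin n)) = g '' A := rfl

noncomputable def mulEquiv :
    ((powerComplex n v 𝒦) ≃o (powerComplex n v 𝒦)) ≃* (inducingPerms n v 𝒦) where
  toFun ρ := ⟨gperm hempty ρ, gperm_mem hempty ρ⟩
  invFun g := indIso g.1 g.2
  left_inv ρ := by
    apply DFunLike.ext
    intro A
    apply Subtype.ext
    rw [indIso_apply, image_eq hempty ρ A]
  right_inv g := by
    apply Subtype.ext
    exact (gperm_unique hempty (indIso g.1 g.2) g.1 (fun A => rfl)).symm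
  map_mul' ρ₁ ρ₂ := by
    apply Subtype.ext
    show gperm hempty (ρ₁ * ρ₂) = gperm hempty ρ₁ * gperm hempty ρ₂
    refine (gperm_unique hempty (ρ₁ * ρ₂) _ ?_).symm
    intro A
    have h2 := image_eq hempty ρ₂ A
    have h1 := image_eq hempty ρ₁ (ρ₂ A)
    show (ρ₁ (ρ₂ A) : Set (Fin v → Fin n)) = _
    rw [h1, h2, ← Set.image_comp]
    rfl

end PCAux2


/-- Lemma: every order-automorphism of the poset `(ℱ, ⊆)` is induced by a unique permutation
of the vertex set `V → N`, and this assignment is an isomorphism from the group of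
order-automorphisms of `(ℱ, ⊆)` onto the group of permutations of `V → N` inducing a
bijection of `ℱ` onto itself. -/
theorem orderAuto_induced_by_vertex_perm (n v : ℕ) (hn : 2 ≤ n) (hv : 1 ≤ v)
    (𝒦 : Set (Set (Fin v))) (hempty : ∅ ∈ 𝒦) :
    (∀ ρ : (powerComplex n v 𝒦) ≃o (powerComplex n v 𝒦),
      ∃! g : Equiv.Perm (Fin v → Fin n), ∀ A : powerComplex n v 𝒦,
        ((ρ A : Set (Fin v → Fin n))) = g '' A) ∧
    ∃ e : ((powerComplex n v 𝒦) ≃o (powerComplex n v 𝒦)) ≃* (inducingPerms n v 𝒦),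
      ∀ (ρ : (powerComplex n v 𝒦) ≃o (powerComplex n v 𝒦)) (A : powerComplex n v 𝒦),
        ((ρ A : Set (Fin v → Fin n))) = (e ρ : Equiv.Perm (Fin v → Fin n)) '' A := by
  constructor
  · intro ρ
    exact ⟨PCAux.gperm hempty ρ, PCAux.image_eq hempty ρ,
      fun g hg => PCAux.gperm_unique hempty ρ g hg⟩
  · exact ⟨PCAux2.mulEquiv hempty, fun ρ A => PCAux.image_eq hempty ρ A⟩
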